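/- For any r>1 and α>0, the set {x∈(0,1]: lim_{n→∞} L_n(x)/n^r = α} has Hausdorff dimension 0; likewise for r=1 the set {x∈(0,1]: lim_{n→∞} L_n(x)/n = α} has Hausdorff dimension 0. -/

import Mathlib

open MeasureTheory Filter Set Real
open scoped ENNReal NNReal

/-- First digit of the power-2-decaying Gauss-like expansion:
`⌈y⌉` in the paper denotes the smallest integer strictly larger than `y`. -/
noncomputable def p2dD1 (x : ℝ) : ℕ := (⌊-Real.logb 2 x⌋ + 1).toNat

/-- The Gauss-like map `T x = 2^n x - 1` on `(1/2^n, 1/2^(n-1)]`. -/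
noncomputable def p2dT (x : ℝ) : ℝ := 2 ^ p2dD1 x * x - 1

/-- `n`-th digit (`n ≥ 1`) of the P2DGL expansion. -/
noncomputable def p2dDigit (n : ℕ) (x : ℝ) : ℕ := p2dD1 (p2dT^[n-1] x)

/-- Maximal digit among the first `n` digits. -/
noncomputable def p2dL (n : ℕ) (x : ℝ) : ℕ :=
  Finset.sup (Finset.Icc 1 n) (fun i => p2dDigit i x)

lemma p2dD1_pos {x : ℝ} (hx : x ∈ Set.Ioc (0:ℝ) 1) : 1 ≤ p2dD1 x := by
  have h0 : Real.logb 2 x ≤ 0 := Real.logb_nonpos (by norm_num) hx.1.le hx.2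
  have : (0:ℤ) ≤ ⌊-Real.logb 2 x⌋ := Int.le_floor.2 (by simpa using neg_nonneg.2 h0)
  unfold p2dD1; omega

lemma p2dD1_bounds {x : ℝ} (hx : x ∈ Set.Ioc (0:ℝ) 1) :
    (2:ℝ) ^ (-(p2dD1 x : ℝ)) < x ∧ x ≤ 2 ^ (1 - (p2dD1 x : ℝ)) := by
  have h0 : Real.logb 2 x ≤ 0 := Real.logb_nonpos (by norm_num) hx.1.le hx.2
  have hk : (0:ℤ) ≤ ⌊-Real.logb 2 x⌋ := Int.le_floor.2 (by simpa using neg_nonneg.2 h0)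
  have hd : (p2dD1 x : ℝ) = (⌊-Real.logb 2 x⌋ : ℝ) + 1 := by
    have h := Int.toNat_of_nonneg (show (0:ℤ) ≤ ⌊-Real.logb 2 x⌋ + 1 by omega)
    unfold p2dD1
    exact_mod_cast congrArg (fun z : ℤ => (z : ℝ)) h
  have h1 : -Real.logb 2 x < (⌊-Real.logb 2 x⌋ : ℝ) + 1 := Int.lt_floor_add_one _
  have h2 : (⌊-Real.logb 2 x⌋ : ℝ) ≤ -Real.logb 2 x := Int.floor_le _
  have hx' : (2:ℝ) ^ Real.logb 2 x = x := Real.rpow_logb (by norm_num) (by norm_num) hx.1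
  constructor
  · calc (2:ℝ) ^ (-(p2dD1 x:ℝ)) < 2 ^ Real.logb 2 x := by
          apply Real.rpow_lt_rpow_left_iff (by norm_num : (1:ℝ) < 2) |>.2
          rw [hd]; linarith
        _ = x := hx'
  · calc x = (2:ℝ) ^ Real.logb 2 x := hx'.symm
        _ ≤ 2 ^ (1 - (p2dD1 x:ℝ)) := by
          apply Real.rpow_le_rpow_left_iff (by norm_num : (1:ℝ) < 2) |>.2
          rw [hd]; linarith

lemma p2dT_mem {x : ℝ} (hx : x ∈ Set.Ioc (0:ℝ) 1) : p2dT x ∈ Set.Ioc (0:ℝ) 1 := by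
  obtain ⟨h1, h2⟩ := p2dD1_bounds hx
  have hp : ((2:ℝ) ^ p2dD1 x : ℝ) = (2:ℝ) ^ ((p2dD1 x : ℕ) : ℝ) := by
    rw [Real.rpow_natCast]
  have hpos : (0:ℝ) < (2:ℝ) ^ ((p2dD1 x:ℕ) : ℝ) := Real.rpow_pos_of_pos (by norm_num) _
  constructor
  · have : (1:ℝ) < 2 ^ ((p2dD1 x:ℕ):ℝ) * x := by
      have := mul_lt_mul_of_pos_left h1 hpos
      rwa [← Real.rpow_add (by norm_num), add_neg_cancel, Real.rpow_zero] at this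
    unfold p2dT; rw [hp]; linarith
  · have : (2:ℝ) ^ ((p2dD1 x:ℕ):ℝ) * x ≤ 2 := by
      have := mul_le_mul_of_nonneg_left h2 hpos.le
      rwa [← Real.rpow_add (by norm_num), add_sub_cancel, Real.rpow_one] at this
    unfold p2dT; rw [hp]; linarith

lemma p2dT_iter_mem {x : ℝ} (hx : x ∈ Set.Ioc (0:ℝ) 1) (k : ℕ) :
    p2dT^[k] x ∈ Set.Ioc (0:ℝ) 1 := by
  induction k with
  | zero => simpa using hx
  | succ k ih => rw [Function.iterate_succ_apply']; exact p2dT_mem ih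

noncomputable def p2dS (n : ℕ) (x : ℝ) : ℕ :=
  ∑ i ∈ Finset.range n, p2dD1 (p2dT^[i] x)

lemma p2dDigit_eq (i : ℕ) (x : ℝ) : p2dDigit (i+1) x = p2dD1 (p2dT^[i] x) := rfl

lemma p2dS_succ' (n : ℕ) (x : ℝ) : p2dS (n+1) x = p2dD1 x + p2dS n (p2dT x) := by
  unfold p2dS
  rw [Finset.sum_range_succ']
  simp only [Function.iterate_succ_apply, Function.iterate_zero_apply]
  ring

lemma p2dL_le_p2dS (n : ℕ) (x : ℝ) : p2dL n x ≤ p2dS n x := by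
  apply Finset.sup_le
  intro i hi
  simp only [Finset.mem_Icc] at hi
  obtain ⟨h1, h2⟩ := hi
  obtain ⟨j, rfl⟩ : ∃ j, i = j + 1 := ⟨i - 1, by omega⟩
  rw [p2dDigit_eq]
  exact Finset.single_le_sum (f := fun k => p2dD1 (p2dT^[k] x)) (fun _ _ => Nat.zero_le _)
    (Finset.mem_range.2 (by omega))

lemma p2dS_witness {n i : ℕ} (h1 : 1 ≤ i) (h2 : i ≤ n) (x : ℝ) :
    p2dS (i-1) x + p2dDigit i x ≤ p2dS n x := by
  obtain ⟨j, rfl⟩ : ∃ j, i = j + 1 := ⟨i - 1, by omega⟩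
  rw [p2dDigit_eq]
  simp only [Nat.add_sub_cancel]
  calc p2dS j x + p2dD1 (p2dT^[j] x) = p2dS (j+1) x := (Finset.sum_range_succ _ _).symm
    _ ≤ p2dS n x := Finset.sum_le_sum_of_subset (Finset.range_subset_range.2 h2)

lemma p2dL_witness {n : ℕ} (hn : 1 ≤ n) (x : ℝ) :
    ∃ i, 1 ≤ i ∧ i ≤ n ∧ p2dDigit i x = p2dL n x := by
  obtain ⟨i, hi, hv⟩ := Finset.exists_mem_eq_sup (Finset.Icc 1 n)
    (Finset.nonempty_Icc.2 hn) (fun i => p2dDigit i x)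
  simp only [Finset.mem_Icc] at hi
  exact ⟨i, hi.1, hi.2, hv.symm⟩

lemma p2dDigit_le_p2dL {n i : ℕ} (h1 : 1 ≤ i) (h2 : i ≤ n) (x : ℝ) :
    p2dDigit i x ≤ p2dL n x :=
  Finset.le_sup (f := fun i => p2dDigit i x) (Finset.mem_Icc.2 ⟨h1, h2⟩)

lemma p2dL_mono {m n : ℕ} (h : m ≤ n) (x : ℝ) : p2dL m x ≤ p2dL n x :=
  Finset.sup_mono (Finset.Icc_subset_Icc_right h)

/-- Points sharing the first `n` digits are within `2⁻¹ ^ p2dS n x`. -/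
lemma p2d_close : ∀ (n : ℕ) (x y : ℝ), x ∈ Set.Ioc (0:ℝ) 1 → y ∈ Set.Ioc (0:ℝ) 1 →
    (∀ i < n, p2dD1 (p2dT^[i] x) = p2dD1 (p2dT^[i] y)) →
    |x - y| ≤ (2⁻¹ : ℝ) ^ (p2dS n x) := by
  intro n
  induction n with
  | zero =>
    intro x y hx hy _
    simp only [p2dS, Finset.range_zero, Finset.sum_empty, pow_zero]
    rw [abs_sub_le_iff]
    constructor <;> nlinarith [hx.1, hx.2, hy.1, hy.2]
  | succ n ih =>
    intro x y hx hy hdig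
    have hd : p2dD1 x = p2dD1 y := by simpa using hdig 0 (Nat.succ_pos n)
    have hTx := p2dT_mem hx
    have hTy := p2dT_mem hy
    have hdig' : ∀ i < n, p2dD1 (p2dT^[i] (p2dT x)) = p2dD1 (p2dT^[i] (p2dT y)) := by
      intro i hi
      have := hdig (i+1) (by omega)
      simpa [Function.iterate_succ_apply] using this
    have hIH := ih (p2dT x) (p2dT y) hTx hTy hdig'
    have hkey : x - y = (2⁻¹:ℝ) ^ (p2dD1 x) * (p2dT x - p2dT y) := by
      unfold p2dT
      rw [← hd]
      have h2 : ((2:ℝ) ^ p2dD1 x) ≠ 0 := by positivity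
      have h3 : (2⁻¹:ℝ) ^ p2dD1 x * 2 ^ p2dD1 x = 1 := by rw [← mul_pow]; norm_num
      linear_combination (y - x) * h3
    rw [p2dS_succ', pow_add, hkey, abs_mul, abs_of_nonneg (by positivity : (0:ℝ) ≤ (2⁻¹:ℝ) ^ (p2dD1 x))]
    exact mul_le_mul_of_nonneg_left hIH (by positivity)

/-- Abstract growth lemma: if `f` self-improves at scale `θ`, it grows linearly with large slope. -/
lemma p2d_growth (f : ℕ → ℝ) (hf0 : ∀ n, 0 ≤ f n) (c θ : ℝ) (hθ0 : 0 ≤ θ) (hθ1 : θ < 1)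
    (N₁ : ℕ)
    (h : ∀ n, N₁ ≤ n → ∃ m, m < n ∧ θ * n - 1 ≤ (m:ℝ) ∧ f m + c * n ≤ f n)
    (B : ℝ) (hB : 0 ≤ B) (hBc : B * (1 - θ) < c) :
    ∃ D : ℝ, ∀ n : ℕ, B * n - D ≤ f n := by
  set δ : ℝ := c - B * (1 - θ) with hδ
  have hδpos : 0 < δ := by linarith
  obtain ⟨N₂, hN₂⟩ : ∃ N₂ : ℕ, B ≤ δ * N₂ := by
    obtain ⟨N₂, hN₂⟩ := exists_nat_ge (B / δ)
    exact ⟨N₂, by rw [div_le_iff₀ hδpos] at hN₂; linarith⟩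
  set N₃ : ℕ := max N₁ N₂ with hN₃
  refine ⟨B * N₃, ?_⟩
  intro n
  induction n using Nat.strong_induction_on with
  | _ n IH =>
    by_cases hn : n < N₃
    · have : B * (n:ℝ) ≤ B * N₃ := by
        apply mul_le_mul_of_nonneg_left _ hB
        exact_mod_cast hn.le
      linarith [hf0 n]
    · push_neg at hn
      obtain ⟨m, hmn, hmθ, hfm⟩ := h n (le_trans (le_max_left _ _) hn)
      have hIHm := IH m hmn
      have hnN₂ : (N₂:ℝ) ≤ (n:ℝ) := by exact_mod_cast le_trans (le_max_right N₁ N₂) hn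
      have hδn : B ≤ δ * n := le_trans hN₂ (by apply mul_le_mul_of_nonneg_left hnN₂ hδpos.le)
      have hBm : B * (θ * n - 1) ≤ B * m := mul_le_mul_of_nonneg_left hmθ hB
      nlinarith [hfm, hIHm]

set_option maxHeartbeats 1000000 in
/-- Pointwise: on the level set, the digit sum grows superlinearly. -/
lemma p2dS_superlinear {r α : ℝ} (hr : 1 ≤ r) (hα : 0 < α) {x : ℝ}
    (hx : x ∈ Set.Ioc (0:ℝ) 1)
    (hlim : Tendsto (fun n : ℕ => (p2dL n x : ℝ) / (n:ℝ) ^ r) atTop (nhds α))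
    (K : ℕ) : ∃ N, ∀ n, N ≤ n → K * n ≤ p2dS n x := by
  rcases eq_or_lt_of_le hr with hr1 | hr1
  · -- r = 1 case
    subst hr1
    simp only [Real.rpow_one] at hlim
    obtain ⟨ε, hεpos, hεα, hεK⟩ : ∃ ε : ℝ, 0 < ε ∧ ε ≤ α/2 ∧ ε ≤ α^2/(4*((K:ℝ)+2)) :=
      ⟨min (α/2) (α^2/(4*((K:ℝ)+2))), lt_min (by linarith) (by positivity),
        min_le_left _ _, min_le_right _ _⟩
    set c : ℝ := α - ε with hc
    have hcpos : 0 < c := by rw [hc]; linarith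
    set θ : ℝ := (α - ε)/(α + ε) with hθ
    have hαε : 0 < α + ε := by linarith
    have hθ0 : 0 ≤ θ := by positivity
    have hθ1 : θ < 1 := by
      rw [hθ, div_lt_one hαε]; linarith
    -- band: eventually (α-ε) k < L_k < (α+ε) k
    have hband : ∀ᶠ k in atTop, |(p2dL k x : ℝ) / k - α| < ε := by
      have := Metric.tendsto_nhds.mp hlim ε hεpos
      simpa [Real.dist_eq] using this
    obtain ⟨N₀, hN₀⟩ := eventually_atTop.1 hband
    set N₀' : ℕ := max N₀ 1 with hN₀'
    have hband' : ∀ k, N₀' ≤ k → (α - ε) * k < (p2dL k x : ℝ) ∧ (p2dL k x : ℝ) < (α + ε) * k := by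
      intro k hk
      have hk1 : 1 ≤ k := le_trans (le_max_right _ _) hk
      have hkpos : (0:ℝ) < k := by exact_mod_cast hk1
      have := hN₀ k (le_trans (le_max_left _ _) hk)
      rw [abs_lt] at this
      have hLk : (p2dL k x:ℝ)/k*k = (p2dL k x:ℝ) := div_mul_cancel₀ _ (ne_of_gt hkpos)
      constructor
      · nlinarith [this.1]
      · nlinarith [this.2]
    set C : ℕ := p2dL N₀' x with hC
    obtain ⟨M, hM⟩ := exists_nat_ge ((C:ℝ) / c)
    set N₁ : ℕ := max N₀' (M + 1) with hN₁
    -- witness hypothesis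
    have hwit : ∀ n, N₁ ≤ n → ∃ m, m < n ∧ θ * n - 1 ≤ (m:ℝ) ∧
        (p2dS m x : ℝ) + c * n ≤ (p2dS n x : ℝ) := by
      intro n hn
      have hn1 : 1 ≤ n := le_trans (le_trans (le_max_right _ _) (by omega : N₀' ≤ max N₀' (M+1))) hn
      have hnN₀' : N₀' ≤ n := le_trans (le_max_left _ _) hn
      obtain ⟨i, hi1, hin, hiv⟩ := p2dL_witness hn1 x
      have hLn := (hband' n hnN₀').1
      have hnpos : (0:ℝ) < n := by exact_mod_cast hn1
      -- the witness value is large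
      have hdi : (α - ε) * n < (p2dDigit i x : ℝ) := by rw [hiv]; exact hLn
      -- i > N₀'
      have hiN₀' : N₀' < i := by
        by_contra hcon
        push_neg at hcon
        have : p2dDigit i x ≤ C := p2dDigit_le_p2dL hi1 hcon x
        have hCn : (C:ℝ) < c * n := by
          have h1 : (C:ℝ) ≤ c * M := by
            rw [div_le_iff₀ hcpos] at hM; linarith [hM]
          have h2 : (M:ℝ) < n := by
            exact_mod_cast lt_of_lt_of_le (Nat.lt_succ_self M) (le_trans (le_max_right N₀' (M+1)) hn)
          nlinarith
        have : (p2dDigit i x : ℝ) ≤ C := by exact_mod_cast this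
        rw [hc] at hCn
        linarith
      -- L_i ≥ digit i, and L_i < (α+ε) i, so θ n < i
      have hLi : (p2dDigit i x : ℝ) ≤ (p2dL i x : ℝ) := by
        exact_mod_cast p2dDigit_le_p2dL hi1 le_rfl x
      have hLiu := (hband' i hiN₀'.le).2
      have hθn : θ * n < i := by
        rw [hθ, div_mul_eq_mul_div, div_lt_iff₀ hαε]
        nlinarith
      refine ⟨i - 1, by omega, ?_, ?_⟩
      · have : ((i-1:ℕ):ℝ) = (i:ℝ) - 1 := by
          have : (1:ℕ) ≤ i := hi1
          push_cast [Nat.cast_sub this]; ring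
        rw [this]; linarith
      · have hS := p2dS_witness hi1 hin x
        have : (p2dS (i-1) x : ℝ) + (p2dDigit i x : ℝ) ≤ (p2dS n x : ℝ) := by exact_mod_cast hS
        rw [hc]
        linarith
    -- slope condition
    have hBc : (K+1:ℝ) * (1 - θ) < c := by
      have h1θ : 1 - θ = 2*ε/(α+ε) := by
        rw [hθ]; field_simp; ring
      have key : ((K:ℝ)+1)*(2*ε) < (α-ε)*(α+ε) := by
        have hK2 : (0:ℝ) < (K:ℝ)+2 := by positivity
        have h1 : 2*ε*((K:ℝ)+2) ≤ α^2/2 := by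
          have h := mul_le_mul_of_nonneg_left hεK (by positivity : (0:ℝ) ≤ 2*((K:ℝ)+2))
          calc 2*ε*((K:ℝ)+2) = 2*((K:ℝ)+2)*ε := by ring
            _ ≤ 2*((K:ℝ)+2)*(α^2/(4*((K:ℝ)+2))) := h
            _ = α^2/2 := by field_simp; ring
        have h2 : (α-ε)*(α+ε) = α^2 - ε^2 := by ring
        nlinarith [hεpos, hεα, hα]
      rw [h1θ, hc, show ((K:ℝ)+1)*(2*ε/(α+ε)) = ((K:ℝ)+1)*(2*ε)/(α+ε) from by ring,
        div_lt_iff₀ hαε]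
      nlinarith [key]
    obtain ⟨D, hD⟩ := p2d_growth (fun n => (p2dS n x : ℝ)) (fun n => by positivity)
      c θ hθ0 hθ1 N₁ hwit (K+1) (by positivity) hBc
    obtain ⟨N, hN⟩ := exists_nat_ge D
    refine ⟨N, fun n hn => ?_⟩
    have h1 := hD n
    have h2 : D ≤ (n:ℝ) := le_trans hN (by exact_mod_cast hn)
    have h3 : (0:ℝ) ≤ (n:ℝ) := Nat.cast_nonneg n
    have : (K:ℝ) * n ≤ (p2dS n x : ℝ) := by linarith
    exact_mod_cast this
  · -- r > 1 case
    have hev1 : ∀ᶠ n : ℕ in atTop, (α/2) * (n:ℝ)^r < (p2dL n x : ℝ) := by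
      have hband : ∀ᶠ n : ℕ in atTop, |(p2dL n x : ℝ) / (n:ℝ)^r - α| < α/2 := by
        have := Metric.tendsto_nhds.mp hlim (α/2) (by linarith)
        simpa [Real.dist_eq] using this
      filter_upwards [hband, eventually_gt_atTop (0:ℕ)] with n hn hn0
      have hnpos : (0:ℝ) < (n:ℝ)^r := by
        apply Real.rpow_pos_of_pos; exact_mod_cast hn0
      rw [abs_lt] at hn
      have hLk : (p2dL n x:ℝ)/(n:ℝ)^r*(n:ℝ)^r = (p2dL n x:ℝ) :=
        div_mul_cancel₀ _ (ne_of_gt hnpos)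
      nlinarith [hn.1]
    have hev2 : ∀ᶠ n : ℕ in atTop, (2*(K:ℝ)/α) ≤ (n:ℝ)^(r-1) := by
      have h2 : Tendsto (fun n : ℕ => ((n:ℝ))^(r-1)) atTop atTop :=
        (tendsto_rpow_atTop (by linarith : 0 < r - 1)).comp tendsto_natCast_atTop_atTop
      exact h2.eventually_ge_atTop _
    obtain ⟨N, hN⟩ := eventually_atTop.1 (hev1.and (hev2.and (eventually_gt_atTop (0:ℕ))))
    refine ⟨N, fun n hn => ?_⟩
    obtain ⟨h1, h2, h3⟩ := hN n hn
    have hnpos : (0:ℝ) < n := by exact_mod_cast h3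
    have hsplit : (n:ℝ)^r = (n:ℝ)^(r-1) * n := by
      have h := Real.rpow_add hnpos (r-1) 1
      rw [sub_add_cancel, Real.rpow_one] at h
      exact h
    have hKn : (K:ℝ) * n ≤ (α/2) * (n:ℝ)^r := by
      rw [hsplit]
      have := mul_le_mul_of_nonneg_right h2 hnpos.le
      calc (K:ℝ)*n = (α/2) * ((2*(K:ℝ)/α) * n) := by field_simp
        _ ≤ (α/2) * ((n:ℝ)^(r-1) * n) := by
            apply mul_le_mul_of_nonneg_left this (by linarith)
    have hLS : (p2dL n x : ℝ) ≤ (p2dS n x : ℝ) := by exact_mod_cast p2dL_le_p2dS n x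
    have : (K:ℝ) * n ≤ (p2dS n x : ℝ) := by linarith
    exact_mod_cast this

/-- The sets used in the covering argument. -/
def p2dF (K N : ℕ) : Set ℝ :=
  {x | x ∈ Set.Ioc (0:ℝ) 1 ∧ ∀ n, N ≤ n → K * n ≤ p2dS n x}

lemma p2d_tsum_pi_pow (g : ℕ → ℝ≥0∞) : ∀ n : ℕ,
    ∑' (f : Fin n → ℕ), ∏ i, g (f i) = (∑' d, g d) ^ n := by
  intro n
  induction n with
  | zero =>
    rw [tsum_eq_single (fun i => 0) (fun b hb => absurd (Subsingleton.elim b _) hb)]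
    simp
  | succ n ih =>
    have he := Equiv.tsum_eq (Fin.consEquiv (fun _ : Fin (n+1) => ℕ))
      (fun f => ∏ i, g (f i))
    rw [← he]
    have hval : ∀ p : ℕ × (Fin n → ℕ),
        (∏ i, g ((Fin.consEquiv (fun _ : Fin (n+1) => ℕ)) p i))
          = g p.1 * ∏ i, g (p.2 i) := by
      rintro ⟨d, f⟩
      rw [Fin.prod_univ_succ]
      simp [Fin.consEquiv]
    calc ∑' (p : ℕ × (Fin n → ℕ)), (∏ i, g ((Fin.consEquiv (fun _ : Fin (n+1) => ℕ)) p i))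
        = ∑' (p : ℕ × (Fin n → ℕ)), g p.1 * ∏ i, g (p.2 i) := by
          exact tsum_congr hval
      _ = ∑' d : ℕ, ∑' (f : Fin n → ℕ), g d * ∏ i, g (f i) :=
          ENNReal.tsum_prod (f := fun d (f : Fin n → ℕ) => g d * ∏ i, g (f i))
      _ = ∑' d : ℕ, g d * ∑' (f : Fin n → ℕ), ∏ i, g (f i) := by
          exact tsum_congr (fun d => ENNReal.tsum_mul_left)
      _ = (∑' d : ℕ, g d) * (∑' (f : Fin n → ℕ), ∏ i, g (f i)) := ENNReal.tsum_mul_right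
      _ = (∑' d, g d) ^ (n+1) := by rw [ih, pow_succ]; ring

/-- diam/edist helper: `ENNReal.ofReal ((2⁻¹:ℝ)^m) = (2⁻¹ : ℝ≥0∞)^m`. -/
lemma p2d_ofReal_pow (m : ℕ) : ENNReal.ofReal ((2⁻¹:ℝ)^m) = (2⁻¹ : ℝ≥0∞)^m := by
  rw [ENNReal.ofReal_pow (by norm_num)]
  congr 1
  rw [ENNReal.ofReal_inv_of_pos (by norm_num)]
  norm_num

set_option maxHeartbeats 1000000 in
lemma p2dF_null {s : ℝ} (hs : 0 < s) : ∃ K : ℕ, 1 ≤ K ∧ ∀ N, μH[s] (p2dF K N) = 0 := by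
  set b : ℝ≥0∞ := (2⁻¹ : ℝ≥0∞) ^ (s/2) with hbdef
  have hb1 : b < 1 := ENNReal.rpow_lt_one (by norm_num) (by linarith)
  have hbne : b ≠ ∞ := (lt_of_lt_of_le hb1 le_top).ne
  set q : ℝ≥0∞ := b * (1 - b)⁻¹ with hq
  have hqne : q ≠ ∞ := by
    apply ENNReal.mul_ne_top hbne
    rw [Ne, ENNReal.inv_eq_top, tsub_eq_zero_iff_le]
    exact fun h => absurd (lt_of_le_of_lt h hb1) (lt_irrefl _)
  -- choose K with b^K * q < 1
  obtain ⟨K, hK1, hKlt⟩ : ∃ K : ℕ, 1 ≤ K ∧ b ^ K * q < 1 := by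
    have h0 : Tendsto (fun K : ℕ => b ^ K * q) atTop (nhds 0) := by
      have := ENNReal.Tendsto.mul_const
        (ENNReal.tendsto_pow_atTop_nhds_zero_of_lt_one hb1) (Or.inr hqne)
      simpa using this
    have hev : ∀ᶠ K : ℕ in atTop, b ^ K * q < 1 :=
      h0.eventually_lt_const (by norm_num)
    obtain ⟨K, hK⟩ := (hev.and (eventually_ge_atTop 1)).exists
    exact ⟨K, hK.2, hK.1⟩
  refine ⟨K, hK1, fun N => ?_⟩
  -- the covering sets
  set t : ∀ n : ℕ, (Fin n → ℕ) → Set ℝ := fun n f =>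
    {y | y ∈ Set.Ioc (0:ℝ) 1 ∧ (∀ i : Fin n, p2dD1 (p2dT^[(i:ℕ)] y) = f i + 1) ∧
      K * n ≤ ∑ i, (f i + 1)} with ht_def
  -- diameters
  have hdiam : ∀ n (f : Fin n → ℕ),
      EMetric.diam (t n f) ≤ (2⁻¹ : ℝ≥0∞) ^ (∑ i, (f i + 1)) := by
    intro n f
    apply EMetric.diam_le
    intro y hy z hz
    obtain ⟨hy1, hy2, _⟩ := hy
    obtain ⟨hz1, hz2, _⟩ := hz
    have hclose := p2d_close n y z hy1 hz1 (fun i hi => by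
      rw [hy2 ⟨i, hi⟩, hz2 ⟨i, hi⟩])
    have hSy : p2dS n y = ∑ i, (f i + 1) := by
      unfold p2dS
      rw [Finset.sum_range (fun i => p2dD1 (p2dT^[i] y))]
      exact Finset.sum_congr rfl (fun i _ => hy2 i)
    rw [edist_dist, Real.dist_eq]
    calc ENNReal.ofReal |y - z| ≤ ENNReal.ofReal ((2⁻¹:ℝ) ^ p2dS n y) :=
          ENNReal.ofReal_le_ofReal hclose
      _ = (2⁻¹ : ℝ≥0∞) ^ p2dS n y := p2d_ofReal_pow _
      _ = (2⁻¹ : ℝ≥0∞) ^ (∑ i, (f i + 1)) := by rw [hSy]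
  have hwn : ∀ n (f : Fin n → ℕ), t n f ≠ ∅ → n ≤ ∑ i, (f i + 1) := by
    intro n f hne
    obtain ⟨y, hy⟩ := Set.nonempty_iff_ne_empty.2 hne
    calc n = K * n / K := by rw [Nat.mul_div_cancel_left _ (by omega)]
      _ ≤ K * n := Nat.div_le_self _ _
      _ ≤ ∑ i, (f i + 1) := hy.2.2
  -- apply the Hausdorff bound
  have hle := MeasureTheory.Measure.hausdorffMeasure_le_liminf_tsum s (p2dF K N)
    (fun n => (2⁻¹ : ℝ≥0∞) ^ n)
    (ENNReal.tendsto_pow_atTop_nhds_zero_of_lt_one (by norm_num)) t ?_ ?_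
  · refine le_antisymm (le_trans hle ?_) zero_le
    -- bound each tsum
    have hbound : ∀ n : ℕ,
        (∑' (f : Fin n → ℕ), EMetric.diam (t n f) ^ s) ≤ (b ^ K * q) ^ n := by
      intro n
      have hterm : ∀ f : Fin n → ℕ,
          EMetric.diam (t n f) ^ s ≤ b ^ (K * n) * ∏ i, b ^ (f i + 1) := by
        intro f
        by_cases hne : t n f = ∅
        · rw [hne, show EMetric.diam (∅ : Set ℝ) = 0 from Metric.ediam_empty, ENNReal.zero_rpow_of_pos hs]
          exact zero_le
        · obtain ⟨y, hy⟩ := Set.nonempty_iff_ne_empty.2 hne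
          set w : ℕ := ∑ i, (f i + 1) with hw
          have hKnw : K * n ≤ w := hy.2.2
          calc EMetric.diam (t n f) ^ s ≤ ((2⁻¹ : ℝ≥0∞) ^ w) ^ s :=
                ENNReal.rpow_le_rpow (hdiam n f) hs.le
            _ = (2⁻¹ : ℝ≥0∞) ^ ((w:ℝ) * s) := by
                rw [← ENNReal.rpow_natCast (2⁻¹ : ℝ≥0∞) w, ← ENNReal.rpow_mul]
            _ ≤ (2⁻¹ : ℝ≥0∞) ^ ((s/2) * ((K*n:ℕ) + (w:ℕ) : ℝ)) := by
                apply ENNReal.rpow_le_rpow_of_exponent_ge (by norm_num)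
                have h1 : ((K*n:ℕ):ℝ) ≤ (w:ℝ) := by exact_mod_cast hKnw
                push_cast at h1 ⊢
                nlinarith [mul_le_mul_of_nonneg_left h1 hs.le]
            _ = b ^ (K * n) * ∏ i, b ^ (f i + 1) := by
                rw [Finset.prod_pow_eq_pow_sum, ← hw, ← pow_add,
                  ← ENNReal.rpow_natCast b (K*n + w), hbdef, ← ENNReal.rpow_mul]
                push_cast
                ring_nf
      calc (∑' (f : Fin n → ℕ), EMetric.diam (t n f) ^ s)
          ≤ ∑' (f : Fin n → ℕ), b ^ (K * n) * ∏ i, b ^ (f i + 1) :=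
            ENNReal.tsum_le_tsum hterm
        _ = b ^ (K * n) * ∑' (f : Fin n → ℕ), ∏ i, b ^ (f i + 1) := ENNReal.tsum_mul_left
        _ = b ^ (K * n) * (∑' d : ℕ, b ^ (d + 1)) ^ n := by
            rw [p2d_tsum_pi_pow (fun d => b ^ (d+1)) n]
        _ = b ^ (K * n) * q ^ n := by rw [ENNReal.tsum_geometric_add_one]
        _ = (b ^ K * q) ^ n := by rw [pow_mul, ← mul_pow (b^K) q n]
    calc liminf (fun n : ℕ => ∑' (f : Fin n → ℕ), EMetric.diam (t n f) ^ s) atTop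
        ≤ liminf (fun n : ℕ => (b ^ K * q) ^ n) atTop := by
          apply liminf_le_liminf (Eventually.of_forall hbound)
      _ = 0 := (ENNReal.tendsto_pow_atTop_nhds_zero_of_lt_one hKlt).liminf_eq
  · -- diameters small
    apply Eventually.of_forall
    intro n f
    by_cases hne : t n f = ∅
    · rw [hne, EMetric.diam_empty]; exact zero_le
    · exact le_trans (hdiam n f)
        (pow_le_pow_right_of_le_one' (by norm_num : (2⁻¹:ℝ≥0∞) ≤ 1) (hwn n f hne))
  · -- covering
    rw [eventually_atTop]
    refine ⟨N, fun n hn => ?_⟩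
    intro x hx
    obtain ⟨hx1, hx2⟩ := hx
    refine Set.mem_iUnion.2 ⟨fun i => p2dD1 (p2dT^[(i:ℕ)] x) - 1, hx1, ?_, ?_⟩
    · intro i
      have h1 : 1 ≤ p2dD1 (p2dT^[(i:ℕ)] x) := p2dD1_pos (p2dT_iter_mem hx1 _)
      show p2dD1 (p2dT^[(i:ℕ)] x) = p2dD1 (p2dT^[(i:ℕ)] x) - 1 + 1
      omega
    · have hsum : (∑ i : Fin n, (p2dD1 (p2dT^[(i:ℕ)] x) - 1 + 1)) = p2dS n x := by
        rw [p2dS, Finset.sum_range (fun i => p2dD1 (p2dT^[i] x))]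
        refine Finset.sum_congr rfl (fun i _ => ?_)
        have h1 : 1 ≤ p2dD1 (p2dT^[(i:ℕ)] x) := p2dD1_pos (p2dT_iter_mem hx1 _)
        omega
      rw [hsum]
      exact hx2 n hn


/-- for `r ≥ 1` the level set of `Lₙ(x)/nʳ → α` has Hausdorff dimension `0`. -/
theorem p2d_dimH_E_r_alpha (r α : ℝ) (hr : 1 ≤ r) (hα : 0 < α) :
    dimH {x : ℝ | x ∈ Set.Ioc (0:ℝ) 1 ∧
        Tendsto (fun n : ℕ => (p2dL n x : ℝ) / (n:ℝ) ^ r) atTop (nhds α)} = 0 := by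
  set E : Set ℝ := {x : ℝ | x ∈ Set.Ioc (0:ℝ) 1 ∧
      Tendsto (fun n : ℕ => (p2dL n x : ℝ) / (n:ℝ) ^ r) atTop (nhds α)} with hE
  have key : ∀ d : ℝ≥0, 0 < d → dimH E ≤ d := by
    intro d hd
    obtain ⟨K, hK1, hnull⟩ := p2dF_null (s := (d:ℝ)) (by exact_mod_cast hd)
    apply dimH_le_of_hausdorffMeasure_ne_top
    have hsub : E ⊆ ⋃ N : ℕ, p2dF K N := by
      intro x hx
      obtain ⟨hx1, hx2⟩ := hx
      obtain ⟨N, hN⟩ := p2dS_superlinear hr hα hx1 hx2 K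
      exact Set.mem_iUnion.2 ⟨N, hx1, hN⟩
    have hle : μH[(d:ℝ)] E ≤ ∑' N : ℕ, μH[(d:ℝ)] (p2dF K N) :=
      le_trans (measure_mono hsub) (measure_iUnion_le _)
    have h0 : (∑' N : ℕ, μH[(d:ℝ)] (p2dF K N)) = 0 := by
      simp [hnull]
    rw [h0] at hle
    rw [le_zero_iff] at hle
    rw [hle]
    exact ENNReal.zero_ne_top
  refine le_antisymm ?_ zero_le
  by_contra hcon
  push_neg at hcon
  obtain ⟨d, hd0, hdlt⟩ := ENNReal.lt_iff_exists_nnreal_btwn.1 hcon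
  have hd0' : 0 < d := by exact_mod_cast hd0
  exact absurd (key d hd0') (not_le.2 hdlt)
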